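/- There exists a finite partially ordered set (V, ≤) with exactly 16 elements such that α_2 = 16 (two disjoint antichains cover all of V), and there is a greedy antichain sequence A_1, A_2 with |A_1| = 8 and |A_2| = 4, so that the two greedy antichains cover exactly 12 = (3/4)·α_2 elements. -/

import Mathlib

/-- A greedy antichain sequence: pairwise disjoint antichains `A 0, …, A (m-1)` such that
each `A i` has maximum cardinality among all antichains contained in the complement of
the previously chosen antichains. -/
def GreedyAntichainSeq (V : Type) [DecidableEq V] [PartialOrder V]
    {m : ℕ} (A : Fin m → Finset V) : Prop :=
  (∀ i, IsAntichain (· ≤ ·) ((A i : Finset V) : Set V)) ∧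
  (∀ i j, i ≠ j → Disjoint (A i) (A j)) ∧
  (∀ (i : Fin m) (B : Finset V), IsAntichain (· ≤ ·) ((B : Finset V) : Set V) →
    (∀ v ∈ B, ∀ j, j < i → v ∉ A j) → B.card ≤ (A i).card)

/-- `α_k`: the maximum cardinality of the union of `k` pairwise disjoint antichains. -/
noncomputable def alphaVal (V : Type) [Fintype V] [DecidableEq V] [PartialOrder V]
    (k : ℕ) : ℕ :=
  sSup {n : ℕ | ∃ A : Fin k → Finset V,
    (∀ i, IsAntichain (· ≤ ·) ((A i : Finset V) : Set V)) ∧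
    (∀ i j, i ≠ j → Disjoint (A i) (A j)) ∧
    n = (Finset.univ.biUnion A).card}

def GreedyAntichainsExample2 (V : Type) [Fintype V] [DecidableEq V] [PartialOrder V] :
    Prop :=
  Fintype.card V = 16 ∧ alphaVal V 2 = 16 ∧
  ∃ A : Fin 2 → Finset V, GreedyAntichainSeq V A ∧
    (A 0).card = 8 ∧ (A 1).card = 4 ∧ (Finset.univ.biUnion A).card = 12

namespace GreedyEx

def myle (a b : Fin 16) : Prop :=
  a = b ∨ ((a : ℕ) < 4 ∧ (b : ℕ) = (a : ℕ) + 12) ∨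
    (4 ≤ (a : ℕ) ∧ (a : ℕ) < 8 ∧ ((b : ℕ) = (a : ℕ) + 4 ∨ 12 ≤ (b : ℕ)))

instance : DecidableRel myle := fun a b => by unfold myle; exact inferInstance

def myPO : PartialOrder (Fin 16) where
  le := myle
  lt a b := myle a b ∧ ¬ myle b a
  lt_iff_le_not_ge _ _ := Iff.rfl
  le_refl a := Or.inl rfl
  le_trans a b c hab hbc := by
    rcases hab with rfl | h
    · exact hbc
    rcases hbc with rfl | h'
    · exact Or.inr h
    exfalso
    rcases h with h | h <;> rcases h' with h' | h' <;> omega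
  le_antisymm a b hab hba := by
    rcases hab with rfl | h
    · rfl
    rcases hba with rfl | h'
    · rfl
    exfalso
    rcases h with h | h <;> rcases h' with h' | h' <;> omega

def A0f : Finset (Fin 16) :=
  Finset.univ.filter (fun v => (v : ℕ) < 4 ∨ (8 ≤ (v : ℕ) ∧ (v : ℕ) < 12))
def A1f : Finset (Fin 16) := Finset.univ.filter (fun v => 4 ≤ (v : ℕ) ∧ (v : ℕ) < 8)
def Y2f : Finset (Fin 16) := Finset.univ.filter (fun v => 12 ≤ (v : ℕ))
def Xf : Finset (Fin 16) := Finset.univ.filter (fun v => (v : ℕ) < 8)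
def Yf : Finset (Fin 16) := Finset.univ.filter (fun v => 8 ≤ (v : ℕ))

lemma antichain_iff' (S : Finset (Fin 16)) :
    IsAntichain (fun a b => myle a b) (↑S : Set (Fin 16)) ↔
      ∀ a ∈ S, ∀ b ∈ S, a ≠ b → ¬ myle a b := by
  constructor
  · intro h a ha b hb hne
    exact h ha hb hne
  · intro h a ha b hb hne
    exact h a ha b hb hne

lemma bound0 (B : Finset (Fin 16))
    (hB : ∀ a ∈ B, ∀ b ∈ B, a ≠ b → ¬ myle a b) : B.card ≤ 8 := by
  by_cases hX2 : ∀ x ∈ B, ¬ (4 ≤ (x : ℕ) ∧ (x : ℕ) < 8)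
  · have hle : B.card ≤ (Finset.range 8).card := by
      refine Finset.card_le_card_of_injOn
        (fun v => if (v : ℕ) < 4 then (v : ℕ) else if (v : ℕ) < 12 then (v : ℕ) - 4 else (v : ℕ) - 12) ?_ ?_
      · intro v hv
        have := hX2 v hv
        simp only [Finset.mem_coe, Finset.mem_range]
        split_ifs <;> omega
      · intro a ha b hb hfab
        by_contra hne
        have hna := hX2 a ha
        have hnb := hX2 b hb
        have h16a : (a : ℕ) < 16 := a.isLt
        have h16b : (b : ℕ) < 16 := b.isLt
        have hvne : (a : ℕ) ≠ (b : ℕ) := fun h => hne (Fin.ext h)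
        dsimp only at hfab
        have hkey : ((a : ℕ) < 4 ∧ (b : ℕ) = (a : ℕ) + 12) ∨
            ((b : ℕ) < 4 ∧ (a : ℕ) = (b : ℕ) + 12) := by
          split_ifs at hfab <;> omega
        rcases hkey with h | h
        · exact hB a ha b hb hne (Or.inr (Or.inl h))
        · exact hB b hb a ha (Ne.symm hne) (Or.inr (Or.inl h))
    simpa using hle
  · push_neg at hX2
    obtain ⟨x, hx, hx4, hx8⟩ := hX2
    have hY2 : ∀ y ∈ B, (y : ℕ) < 12 := by
      intro y hy
      by_contra h
      push_neg at h
      have hne : x ≠ y := by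
        intro e
        rw [e] at hx8
        omega
      exact hB x hx y hy hne (Or.inr (Or.inr ⟨hx4, hx8, Or.inr h⟩))
    have hle : B.card ≤ (Finset.range 8).card := by
      refine Finset.card_le_card_of_injOn (fun v => if (v : ℕ) < 8 then (v : ℕ) else (v : ℕ) - 4) ?_ ?_
      · intro v hv
        have := hY2 v hv
        simp only [Finset.mem_coe, Finset.mem_range]
        split_ifs <;> omega
      · intro a ha b hb hfab
        by_contra hne
        have hya := hY2 a ha
        have hyb := hY2 b hb
        have hvne : (a : ℕ) ≠ (b : ℕ) := fun h => hne (Fin.ext h)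
        dsimp only at hfab
        have hkey : (4 ≤ (a : ℕ) ∧ (a : ℕ) < 8 ∧ (b : ℕ) = (a : ℕ) + 4) ∨
            (4 ≤ (b : ℕ) ∧ (b : ℕ) < 8 ∧ (a : ℕ) = (b : ℕ) + 4) := by
          split_ifs at hfab <;> omega
        rcases hkey with ⟨h1, h2, h3⟩ | ⟨h1, h2, h3⟩
        · exact hB a ha b hb hne (Or.inr (Or.inr ⟨h1, h2, Or.inl h3⟩))
        · exact hB b hb a ha (Ne.symm hne) (Or.inr (Or.inr ⟨h1, h2, Or.inl h3⟩))
    simpa using hle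

lemma bound1 (B : Finset (Fin 16))
    (hB : ∀ a ∈ B, ∀ b ∈ B, a ≠ b → ¬ myle a b)
    (hA : ∀ v ∈ B, v ∉ A0f) : B.card ≤ 4 := by
  have hmem : ∀ v ∈ B, (4 ≤ (v : ℕ) ∧ (v : ℕ) < 8) ∨ 12 ≤ (v : ℕ) := by
    intro v hv
    have h := hA v hv
    simp only [A0f, Finset.mem_filter, Finset.mem_univ, true_and] at h
    omega
  by_cases h : ∀ v ∈ B, (v : ℕ) < 8
  · have hsub : B ⊆ A1f := by
      intro v hv
      simp only [A1f, Finset.mem_filter, Finset.mem_univ, true_and]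
      have h1 := hmem v hv
      have h2 := h v hv
      omega
    calc B.card ≤ A1f.card := Finset.card_le_card hsub
      _ = 4 := by decide
  · push_neg at h
    obtain ⟨y, hy, hy8⟩ := h
    have hy12 : 12 ≤ (y : ℕ) := by
      rcases hmem y hy with h | h
      · omega
      · exact h
    have hsub : B ⊆ Y2f := by
      intro v hv
      rcases hmem v hv with hv2 | hv2
      · exfalso
        have hne : v ≠ y := by
          intro e
          rw [e] at hv2
          omega
        exact hB v hv y hy hne (Or.inr (Or.inr ⟨hv2.1, hv2.2, Or.inr hy12⟩))
      · simp only [Y2f, Finset.mem_filter, Finset.mem_univ, true_and]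
        exact hv2
    calc B.card ≤ Y2f.card := Finset.card_le_card hsub
      _ = 4 := by decide

end GreedyEx

open GreedyEx
/-- There is a 16-element finite poset with `α_2 = 16` admitting a greedy antichain
sequence `A_1, A_2` with `|A_1| = 8` and `|A_2| = 4`, thus covering exactly
`12 = (3/4)·α_2` elements. -/
theorem greedy_antichains_example_k2 :
    ∃ (V : Type) (f : Fintype V) (d : DecidableEq V) (p : PartialOrder V),
      @GreedyAntichainsExample2 V f d p := by
  refine ⟨Fin 16, inferInstance, inferInstance, myPO, ?_, ?_, ?_⟩
  · simp
  · -- alphaVal = 16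
    have hbdd : ∀ n ∈ {n : ℕ | ∃ A : Fin 2 → Finset (Fin 16),
        (∀ i, IsAntichain (fun a b => myle a b) ((A i : Finset (Fin 16)) : Set (Fin 16))) ∧
        (∀ i j, i ≠ j → Disjoint (A i) (A j)) ∧
        n = (Finset.univ.biUnion A).card}, n ≤ 16 := by
      rintro n ⟨A, -, -, rfl⟩
      calc (Finset.univ.biUnion A).card ≤ Fintype.card (Fin 16) := Finset.card_le_univ _
        _ = 16 := by simp
    have hmem : (16 : ℕ) ∈ {n : ℕ | ∃ A : Fin 2 → Finset (Fin 16),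
        (∀ i, IsAntichain (fun a b => myle a b) ((A i : Finset (Fin 16)) : Set (Fin 16))) ∧
        (∀ i j, i ≠ j → Disjoint (A i) (A j)) ∧
        n = (Finset.univ.biUnion A).card} := by
      refine ⟨![Xf, Yf], ?_, ?_, ?_⟩
      · intro i
        fin_cases i
        · exact (antichain_iff' Xf).mpr (by decide)
        · exact (antichain_iff' Yf).mpr (by decide)
      · intro i j hij
        fin_cases i <;> fin_cases j <;> first | (exact absurd rfl hij) | decide
      · decide
    exact le_antisymm (csSup_le ⟨16, hmem⟩ hbdd) (le_csSup ⟨16, hbdd⟩ hmem)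
  · refine ⟨![A0f, A1f], ⟨?_, ?_, ?_⟩, by decide, by decide, by decide⟩
    · intro i
      fin_cases i
      · exact (antichain_iff' A0f).mpr (by decide)
      · exact (antichain_iff' A1f).mpr (by decide)
    · intro i j hij
      fin_cases i <;> fin_cases j <;> first | (exact absurd rfl hij) | decide
    · intro i B hB havoid
      fin_cases i
      · show B.card ≤ A0f.card
        have h8 : B.card ≤ 8 := bound0 B ((antichain_iff' B).mp hB)
        have : A0f.card = 8 := by decide
        omega
      · show B.card ≤ A1f.card
        have hA : ∀ v ∈ B, v ∉ A0f := by
          intro v hv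
          exact havoid v hv 0 (by decide)
        have h4 : B.card ≤ 4 := bound1 B ((antichain_iff' B).mp hB) hA
        have : A1f.card = 4 := by decide
        omega
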